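/- Let M be a rank-k positive semi-definite d×d real matrix and x a vector lying in the column space of M. Then (M + xxᵀ)⁺ = M⁺ - (M⁺ x xᵀ M⁺)/(1 + xᵀ M⁺ x), where ⁺ denotes the Moore–Penrose pseudoinverse. -/

import Mathlib

open Matrix

/-- The four Moore–Penrose conditions characterizing the pseudoinverse. -/
def IsMoorePenroseInv {d : ℕ} (A B : Matrix (Fin d) (Fin d) ℝ) : Prop :=
  A * B * A = A ∧ B * A * B = B ∧ (A * B)ᵀ = A * B ∧ (B * A)ᵀ = B * A

section Helpers
variable {d : ℕ}

lemma mul_vecMulVec' (N : Matrix (Fin d) (Fin d) ℝ) (x y : Fin d → ℝ) :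
    N * vecMulVec x y = vecMulVec (N *ᵥ x) y := by
  ext i j
  simp only [mul_apply, vecMulVec_apply, mulVec, dotProduct, Finset.sum_mul]
  exact Finset.sum_congr rfl fun l _ => by ring

lemma vecMulVec_mul' (N : Matrix (Fin d) (Fin d) ℝ) (x y : Fin d → ℝ) :
    vecMulVec x y * N = vecMulVec x (y ᵥ* N) := by
  ext i j
  simp only [mul_apply, vecMulVec_apply, vecMul, dotProduct, Finset.mul_sum]
  exact Finset.sum_congr rfl fun l _ => by ring

lemma vecMulVec_mul_vecMulVec (x y u v : Fin d → ℝ) :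
    vecMulVec x y * vecMulVec u v = (y ⬝ᵥ u) • vecMulVec x v := by
  ext i j
  simp only [mul_apply, vecMulVec_apply, Matrix.smul_apply, dotProduct, smul_eq_mul, Finset.sum_mul]
  exact Finset.sum_congr rfl fun l _ => by ring

lemma vecMulVec_transpose' (x y : Fin d → ℝ) :
    (vecMulVec x y)ᵀ = vecMulVec y x := by
  ext i j; simp [vecMulVec_apply, mul_comm]

lemma mp_unique {A B C : Matrix (Fin d) (Fin d) ℝ}
    (hB : IsMoorePenroseInv A B) (hC : IsMoorePenroseInv A C) : B = C := by
  obtain ⟨hB1, hB2, hB3, hB4⟩ := hB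
  obtain ⟨hC1, hC2, hC3, hC4⟩ := hC
  have hAB : A * B = A * C := by
    calc A * B = (A * C * A) * B := by rw [hC1]
    _ = (A * C) * (A * B) := by rw [Matrix.mul_assoc, Matrix.mul_assoc]
    _ = (A * C)ᵀ * (A * B)ᵀ := by rw [hC3, hB3]
    _ = ((A * B) * (A * C))ᵀ := by simp [Matrix.transpose_mul, Matrix.mul_assoc]
    _ = ((A * B * A) * C)ᵀ := by simp [Matrix.mul_assoc]
    _ = (A * C)ᵀ := by rw [hB1]
    _ = A * C := hC3
  have hBA : B * A = C * A := by
    calc B * A = B * (A * C * A) := by rw [hC1]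
    _ = (B * A) * (C * A) := by rw [← Matrix.mul_assoc, ← Matrix.mul_assoc, Matrix.mul_assoc]
    _ = (B * A)ᵀ * (C * A)ᵀ := by rw [hC4, hB4]
    _ = ((C * A) * (B * A))ᵀ := by simp [Matrix.transpose_mul, Matrix.mul_assoc]
    _ = (C * (A * B * A))ᵀ := by simp [Matrix.mul_assoc]
    _ = (C * A)ᵀ := by rw [hB1]
    _ = C * A := hC4
  calc B = B * A * B := hB2.symm
  _ = C * A * B := by rw [hBA]
  _ = C * (A * B) := by rw [Matrix.mul_assoc]
  _ = C * (A * C) := by rw [hAB]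
  _ = C := by rw [← Matrix.mul_assoc, hC2]

end Helpers

theorem pinv_rank_one_update
    {d k : ℕ} (M : Matrix (Fin d) (Fin d) ℝ)
    (hM : M.PosSemidef) (hrank : M.rank = k)
    (x : Fin d → ℝ) (hx : ∃ y : Fin d → ℝ, M *ᵥ y = x)
    (P Q : Matrix (Fin d) (Fin d) ℝ)
    (hP : IsMoorePenroseInv M P)
    (hQ : IsMoorePenroseInv (M + Matrix.vecMulVec x x) Q) :
    Q = P - (1 + x ⬝ᵥ (P *ᵥ x))⁻¹ • (P * Matrix.vecMulVec x x * P) := by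
  obtain ⟨y, hy⟩ := hx
  obtain ⟨hP1, hP2, hP3, hP4⟩ := hP
  have hMsymm : Mᵀ = M := hM.1
  have hPt : IsMoorePenroseInv M Pᵀ := by
    refine ⟨?_, ?_, ?_, ?_⟩
    · calc M * Pᵀ * M = (Mᵀ * P * Mᵀ)ᵀ := by simp [Matrix.transpose_mul, Matrix.mul_assoc]
      _ = M := by rw [hMsymm, hP1, hMsymm]
    · calc Pᵀ * M * Pᵀ = (P * Mᵀ * P)ᵀ := by simp [Matrix.transpose_mul, Matrix.mul_assoc]
      _ = Pᵀ := by rw [hMsymm, hP2]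
    · calc (M * Pᵀ)ᵀ = P * Mᵀ := by simp
      _ = P * M := by rw [hMsymm]
      _ = (P * M)ᵀᵀ := (Matrix.transpose_transpose _).symm
      _ = (P * M)ᵀ := congrArg Matrix.transpose hP4
      _ = Mᵀ * Pᵀ := by simp
      _ = M * Pᵀ := by rw [hMsymm]
    · calc (Pᵀ * M)ᵀ = Mᵀ * P := by simp
      _ = M * P := by rw [hMsymm]
      _ = (M * P)ᵀᵀ := (Matrix.transpose_transpose _).symm
      _ = (M * P)ᵀ := congrArg Matrix.transpose hP3
      _ = Pᵀ * Mᵀ := by simp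
      _ = Pᵀ * M := by rw [hMsymm]
  have hPsymm : Pᵀ = P := mp_unique hPt ⟨hP1, hP2, hP3, hP4⟩
  have hcomm : M * P = P * M := by
    calc M * P = (M * P)ᵀ := hP3.symm
    _ = Pᵀ * Mᵀ := Matrix.transpose_mul _ _
    _ = P * M := by rw [hPsymm, hMsymm]
  have hMPx : (M * P) *ᵥ x = x := by
    rw [← hy, mulVec_mulVec, hP1]
  have hxPM : (x ᵥ* (P * M)) = x := by
    calc x ᵥ* (P * M) = (P * M)ᵀ *ᵥ x := by rw [Matrix.mulVec_transpose]
    _ = (M * P) *ᵥ x := by rw [Matrix.transpose_mul, hPsymm, hMsymm]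
    _ = x := hMPx
  set X := Matrix.vecMulVec x x with hX
  set s := x ⬝ᵥ (P *ᵥ x) with hs
  have hs0 : 0 ≤ s := by
    have h : s = y ⬝ᵥ ((Mᵀ * P * M) *ᵥ y) := by
      rw [hs, ← hy, Matrix.dotProduct_mulVec, Matrix.vecMul_mulVec,
        ← Matrix.dotProduct_mulVec, mulVec_mulVec, Matrix.mul_assoc]
    rw [h, hMsymm, hP1]
    simpa using hM.dotProduct_mulVec_nonneg y
  have hc : (1 : ℝ) + s ≠ 0 := by positivity
  have hMPX : M * P * X = X := by
    rw [hX, Matrix.mul_assoc, mul_vecMulVec' P x x, mul_vecMulVec' M, mulVec_mulVec, hMPx]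
  have hXPM : X * (P * M) = X := by
    rw [hX, vecMulVec_mul', hxPM]
  have hXPX : X * P * X = s • X := by
    rw [hX, Matrix.mul_assoc, mul_vecMulVec' P x x, _root_.vecMulVec_mul_vecMulVec, ← hs]
  set A := M + X with hA
  set B := P - (1 + s)⁻¹ • (P * X * P) with hB
  have hkey1 : M * (P * X * P) = X * P := by
    rw [← Matrix.mul_assoc, ← Matrix.mul_assoc, hMPX]
  have hkey2 : X * (P * X * P) = s • (X * P) := by
    rw [← Matrix.mul_assoc, ← Matrix.mul_assoc, hXPX, Matrix.smul_mul]
  have hkey3 : (P * X * P) * M = P * X := by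
    rw [Matrix.mul_assoc (P * X) P M, Matrix.mul_assoc P X (P * M), hXPM]
  have hkey4 : (P * X * P) * X = s • (P * X) := by
    rw [Matrix.mul_assoc (P * X) P X, Matrix.mul_assoc P X (P * X),
      ← Matrix.mul_assoc X P X, hXPX, Matrix.mul_smul]
  have hsmul : ∀ N : Matrix (Fin d) (Fin d) ℝ,
      (1 + s)⁻¹ • N + (1 + s)⁻¹ • (s • N) = N := by
    intro N
    rw [smul_smul, ← add_smul]
    rw [show (1 + s)⁻¹ + (1 + s)⁻¹ * s = 1 by field_simp]
    rw [one_smul]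
  have hAB : A * B = M * P := by
    have expand : A * B =
        M * P + X * P - ((1 + s)⁻¹ • (M * (P * X * P)) + (1 + s)⁻¹ • (X * (P * X * P))) := by
      rw [hA, hB, Matrix.add_mul, Matrix.mul_sub, Matrix.mul_sub,
        Matrix.mul_smul, Matrix.mul_smul]
      abel
    rw [expand, hkey1, hkey2, hsmul (X * P)]
    abel
  have hBA : B * A = M * P := by
    have expand : B * A =
        P * M + P * X - ((1 + s)⁻¹ • ((P * X * P) * M) + (1 + s)⁻¹ • ((P * X * P) * X)) := by
      rw [hB, hA, Matrix.mul_add, Matrix.sub_mul, Matrix.sub_mul,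
        Matrix.smul_mul, Matrix.smul_mul]
      abel
    rw [expand, hkey3, hkey4, hsmul (P * X), hcomm]
    abel
  have hBmp : IsMoorePenroseInv A B := by
    refine ⟨?_, ?_, ?_, ?_⟩
    · rw [hAB, hA, Matrix.mul_add, hP1, hMPX]
    · rw [Matrix.mul_assoc, hAB, hB, Matrix.sub_mul, Matrix.smul_mul,
        ← Matrix.mul_assoc P M P, hP2, ← Matrix.mul_assoc (P * X * P) M P, hkey3]
    · rw [hAB, hP3]
    · rw [hBA, hP3]
  exact mp_unique hQ hBmp
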